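/- Let C be a completely regular code in F_2^n with minimum distance δ ≥ 3 such that the all-zero vector 0 ∈ C and the all-one vector 1 ∉ C. Then the covering radius ρ of C satisfies ρ ≥ δ − 1, and C_ρ = 1 + C (the translate of C by the all-one vector). -/

import Mathlib

/-- Vertices of the binary Hamming graph of length `n`, identified with `F_2^n`. -/
abbrev V (n : ℕ) := Fin n → ZMod 2

/-- Distance of a vertex `α` from a code `C`: `d(α,C) = min_{β ∈ C} d(α,β)`. -/
noncomputable def distTo {n : ℕ} (C : Set (V n)) (α : V n) : ℕ :=
  sInf (hammingDist α '' C)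

/-- Covering radius of a code: the maximum over all vertices of the distance to the code. -/
noncomputable def coveringRadius {n : ℕ} (C : Set (V n)) : ℕ :=
  sSup (Set.range (distTo C))

/-- A code `C` is completely regular if for every `i` and `k`, the number of codewords at
Hamming distance `k` from a vertex `ν` with `d(ν,C) = i` depends only on `i` and `k`. -/
def CompletelyRegular {n : ℕ} (C : Set (V n)) : Prop :=
  ∀ (i k : ℕ) (ν μ : V n), distTo C ν = i → distTo C μ = i →
    {β ∈ C | hammingDist ν β = k}.ncard = {β ∈ C | hammingDist μ β = k}.ncard

/-- `δ` is the minimum distance of `C`: the least Hamming distance between distinct codewords. -/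
def IsMinDist {n : ℕ} (C : Set (V n)) (δ : ℕ) : Prop :=
  (∀ α ∈ C, ∀ β ∈ C, α ≠ β → δ ≤ hammingDist α β) ∧
  (∃ α ∈ C, ∃ β ∈ C, α ≠ β ∧ hammingDist α β = δ)

section Basic

variable {n : ℕ} {C : Set (V n)}

lemma zmod2_ne_iff : ∀ a b : ZMod 2, a ≠ b ↔ a = b + 1 := by decide

lemma one_add_one_eq_zero' : (1 : V n) + 1 = 0 := by
  funext i; simp only [Pi.add_apply, Pi.one_apply, Pi.zero_apply]; decide

lemma one_add_one_add (α : V n) : (1 : V n) + (1 + α) = α := by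
  rw [← add_assoc, one_add_one_eq_zero', zero_add]

lemma hd_le_n (x y : V n) : hammingDist x y ≤ n := by
  simpa using (hammingDist_le_card_fintype (x := x) (y := y))

lemma zmod2_one_add_ne : ∀ a b : ZMod 2, (1 + a ≠ b) ↔ ¬(a ≠ b) := by decide

lemma hd_compl_left (x y : V n) : hammingDist (1 + x) y = n - hammingDist x y := by
  classical
  have h1 : ({i | (1 + x) i ≠ y i} : Finset (Fin n)) = ({i | x i ≠ y i} : Finset (Fin n))ᶜ := by
    ext i
    simp only [Finset.mem_filter, Finset.mem_univ, true_and, Finset.mem_compl, Pi.add_apply,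
      Pi.one_apply]
    exact zmod2_one_add_ne (x i) (y i)
  show ({i | (1 + x) i ≠ y i} : Finset (Fin n)).card = n - ({i | x i ≠ y i} : Finset (Fin n)).card
  rw [h1, Finset.card_compl]
  simp

lemma hd_compl_both (x y : V n) : hammingDist (1 + x) (1 + y) = hammingDist x y := by
  unfold hammingDist
  congr 1
  ext i
  simp only [Finset.mem_filter, Finset.mem_univ, true_and, Pi.add_apply]
  constructor
  · intro h h2; exact h (by rw [h2])
  · intro h h2; exact h (by exact add_left_cancel h2)

lemma distTo_le {c : V n} (hc : c ∈ C) (α : V n) : distTo C α ≤ hammingDist α c :=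
  Nat.sInf_le ⟨c, hc, rfl⟩

lemma exists_closest (hne : C.Nonempty) (α : V n) :
    ∃ c ∈ C, hammingDist α c = distTo C α := by
  have : (hammingDist α '' C).Nonempty := hne.image _
  obtain ⟨c, hc, h⟩ := Nat.sInf_mem this
  exact ⟨c, hc, h⟩

lemma distTo_le_n (hne : C.Nonempty) (α : V n) : distTo C α ≤ n := by
  obtain ⟨c, hc, h⟩ := exists_closest hne α
  exact h ▸ hd_le_n α c

lemma distTo_eq_zero_iff (hne : C.Nonempty) {α : V n} : distTo C α = 0 ↔ α ∈ C := by
  constructor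
  · intro h
    obtain ⟨c, hc, hd⟩ := exists_closest hne α
    rw [h, hammingDist_eq_zero] at hd
    rwa [hd]
  · intro h
    exact Nat.le_antisymm (by simpa using distTo_le h α) (Nat.zero_le _)

lemma distTo_bddAbove (hne : C.Nonempty) : BddAbove (Set.range (distTo C)) := by
  refine ⟨n, ?_⟩
  rintro x ⟨α, rfl⟩
  exact distTo_le_n hne α

lemma distTo_le_cr (hne : C.Nonempty) (α : V n) : distTo C α ≤ coveringRadius C :=
  le_csSup (distTo_bddAbove hne) ⟨α, rfl⟩

lemma exists_cr (hne : C.Nonempty) : ∃ α : V n, distTo C α = coveringRadius C := by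
  have h1 : (Set.range (distTo C)).Nonempty := ⟨_, ⟨0, rfl⟩⟩
  obtain ⟨α, hα⟩ := Nat.sSup_mem h1 (distTo_bddAbove hne)
  exact ⟨α, hα⟩

lemma distTo_lip (hne : C.Nonempty) (α β : V n) :
    distTo C α ≤ distTo C β + hammingDist α β := by
  obtain ⟨c, hc, h⟩ := exists_closest hne β
  calc distTo C α ≤ hammingDist α c := distTo_le hc α
    _ ≤ hammingDist α β + hammingDist β c := hammingDist_triangle _ _ _
    _ = distTo C β + hammingDist α β := by rw [h]; ring

end Basic

section CRpart

variable {n : ℕ} {C : Set (V n)}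

lemma countEq (hcr : CompletelyRegular C) {ν μ : V n}
    (h : distTo C ν = distTo C μ) (k : ℕ) :
    (∃ c ∈ C, hammingDist ν c = k) → (∃ c ∈ C, hammingDist μ c = k) := by
  rintro ⟨c, hc, hk⟩
  have h2 := hcr (distTo C ν) k ν μ rfl h.symm
  have hpos : {β ∈ C | hammingDist ν β = k}.ncard ≠ 0 := by
    have : ({β ∈ C | hammingDist ν β = k} : Set (V n)).Nonempty := ⟨c, hc, hk⟩
    exact ne_of_gt ((Set.ncard_pos (Set.toFinite _)).mpr this)
  rw [h2] at hpos
  obtain ⟨c', hc', hk'⟩ := Set.nonempty_of_ncard_ne_zero hpos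
  exact ⟨c', hc', hk'⟩

lemma g_eq (hcr : CompletelyRegular C) (hne : C.Nonempty) {ν μ : V n}
    (h : distTo C ν = distTo C μ) : distTo C (1 + ν) = distTo C (1 + μ) := by
  have key : ∀ ν μ : V n, distTo C ν = distTo C μ →
      distTo C (1 + μ) ≤ distTo C (1 + ν) := by
    intro ν μ hm
    obtain ⟨c, hc, hd⟩ := exists_closest hne (1 + ν)
    have hb := hd_le_n ν c
    have hcompl := hd_compl_left ν c
    have hdc : hammingDist ν c = n - distTo C (1 + ν) := by omega
    obtain ⟨c', hc', hd'⟩ := countEq hcr hm _ ⟨c, hc, hdc⟩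
    have hcompl' := hd_compl_left μ c'
    have hbn := distTo_le_n hne (1 + ν)
    have h3 : hammingDist (1 + μ) c' = distTo C (1 + ν) := by omega
    exact h3 ▸ distTo_le hc' (1 + μ)
  exact le_antisymm (key μ ν h.symm) (key ν μ h)

lemma g_inj (hcr : CompletelyRegular C) (hne : C.Nonempty) {ν μ : V n}
    (h : distTo C (1 + ν) = distTo C (1 + μ)) : distTo C ν = distTo C μ := by
  have := g_eq hcr hne h
  rwa [one_add_one_add, one_add_one_add] at this

lemma A1 (hcr : CompletelyRegular C) (h0 : (0 : V n) ∈ C) {α : V n} (hα : α ∈ C) :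
    distTo C (1 + α) = distTo C 1 := by
  have hne : C.Nonempty := ⟨0, h0⟩
  have h := g_eq hcr hne (ν := α) (μ := 0)
    (by rw [(distTo_eq_zero_iff hne).mpr hα, (distTo_eq_zero_iff hne).mpr h0])
  simpa using h

lemma A2 (hcr : CompletelyRegular C) (h0 : (0 : V n) ∈ C) {α : V n}
    (h : distTo C α = distTo C 1) : 1 + α ∈ C := by
  have hne : C.Nonempty := ⟨0, h0⟩
  have h2 := g_eq hcr hne (ν := α) (μ := 1) h
  rw [one_add_one_eq_zero', (distTo_eq_zero_iff hne).mpr h0] at h2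
  exact (distTo_eq_zero_iff hne).mp h2

lemma step_down (hne : C.Nonempty) {α : V n} {i : ℕ} (h : distTo C α = i + 1) :
    ∃ β : V n, distTo C β = i ∧ hammingDist α β = 1 := by
  classical
  obtain ⟨c, hc, hd⟩ := exists_closest hne α
  have hdiff : ({j | α j ≠ c j} : Finset (Fin n)).Nonempty := by
    rw [← Finset.card_pos]
    show 0 < hammingDist α c
    omega
  obtain ⟨j, hj⟩ := hdiff
  have hjne : α j ≠ c j := by simpa using hj
  refine ⟨Function.update α j (c j), ?_, ?_⟩
  · have hdβc : hammingDist (Function.update α j (c j)) c = i := by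
      have hset : ({k | Function.update α j (c j) k ≠ c k} : Finset (Fin n)) =
          ({k | α k ≠ c k} : Finset (Fin n)).erase j := by
        ext k
        by_cases hk : k = j
        · subst hk; simp [Function.update_self]
        · simp [Function.update_of_ne hk, hk]
      show ({k | Function.update α j (c j) k ≠ c k} : Finset (Fin n)).card = i
      rw [hset, Finset.card_erase_of_mem hj]
      show hammingDist α c - 1 = i
      omega
    have h1 : distTo C (Function.update α j (c j)) ≤ i := hdβc ▸ distTo_le hc _
    have hd1 : hammingDist α (Function.update α j (c j)) = 1 := by
      have hset : ({k | α k ≠ Function.update α j (c j) k} : Finset (Fin n)) = {j} := by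
        ext k
        by_cases hk : k = j
        · subst hk; simp [Function.update_self, hjne]
        · simp [Function.update_of_ne hk, hk]
      show ({k | α k ≠ Function.update α j (c j) k} : Finset (Fin n)).card = 1
      rw [hset]; simp
    have h2 := distTo_lip hne α (Function.update α j (c j))
    omega
  · have hset : ({k | α k ≠ Function.update α j (c j) k} : Finset (Fin n)) = {j} := by
      ext k
      by_cases hk : k = j
      · subst hk; simp [Function.update_self, hjne]
      · simp [Function.update_of_ne hk, hk]
    show ({k | α k ≠ Function.update α j (c j) k} : Finset (Fin n)).card = 1
    rw [hset]; simp

lemma levels_nonempty (hne : C.Nonempty) {i : ℕ} (hi : i ≤ coveringRadius C) :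
    ∃ α : V n, distTo C α = i := by
  obtain ⟨α, hα⟩ := exists_cr hne
  have key : ∀ k : ℕ, ∀ α : V n, distTo C α = k → ∀ j ≤ k, ∃ β : V n, distTo C β = j := by
    intro k
    induction k with
    | zero => intro α hα j hj; exact ⟨α, by omega⟩
    | succ m ih =>
      intro α hα j hj
      rcases Nat.eq_or_lt_of_le hj with he | hlt
      · exact ⟨α, by omega⟩
      · obtain ⟨β, hβ, _⟩ := step_down hne hα
        exact ih β hβ j (by omega)
  exact key _ α hα i hi

end CRpart

section PartA

variable {n : ℕ} {C : Set (V n)}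

lemma s_eq_cr (hcr : CompletelyRegular C) (h0 : (0 : V n) ∈ C) (h1 : (1 : V n) ∉ C) :
    distTo C 1 = coveringRadius C := by
  have hne : C.Nonempty := ⟨0, h0⟩
  set s := distTo C 1 with hs
  set ρ := coveringRadius C with hρ
  have hs1 : 1 ≤ s := by
    rcases Nat.eq_zero_or_pos s with h | h
    · exact absurd ((distTo_eq_zero_iff hne).mp h) h1
    · exact h
  have hsρ : s ≤ ρ := distTo_le_cr hne 1
  by_contra hne2
  have hslt : s < ρ := lt_of_le_of_ne hsρ hne2
  -- T1 : every vertex at level s+1 has complement at level 1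
  have T1 : ∀ δv : V n, distTo C δv = s + 1 → distTo C (1 + δv) = 1 := by
    intro δv hδv
    obtain ⟨β, hβ, hd⟩ := step_down hne hδv
    have hβC : (1 : V n) + β ∈ C := A2 hcr h0 hβ
    have hle : distTo C (1 + δv) ≤ 1 := by
      have h2 := distTo_le hβC (1 + δv)
      rwa [hd_compl_both, hd] at h2
    have hne0 : distTo C (1 + δv) ≠ 0 := by
      intro h'
      have hmem : (1 : V n) + δv ∈ C := (distTo_eq_zero_iff hne).mp h'
      have := A1 hcr h0 hmem
      rw [one_add_one_add] at this
      omega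
    omega
  -- Q : for i ≤ ρ - s, vertices at level i have complement at level s + i
  have Q : ∀ i, i ≤ ρ - s → ∀ α : V n, distTo C α = i → distTo C (1 + α) = s + i := by
    intro i
    induction i using Nat.strong_induction_on with
    | _ i ih =>
      intro hiρ α hα
      match i, hiρ, hα, ih with
      | 0, hiρ, hα, ih =>
        rw [A1 hcr h0 ((distTo_eq_zero_iff hne).mp hα)]
        omega
      | 1, hiρ, hα, ih =>
        have hs1ρ : s + 1 ≤ ρ := by omega
        obtain ⟨δv, hδv⟩ := levels_nonempty hne hs1ρ
        have h2 := g_eq hcr hne (ν := α) (μ := 1 + δv) (by rw [hα, T1 δv hδv])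
        rw [one_add_one_add, hδv] at h2
        exact h2
      | (m+2), hiρ, hα, ih =>
        obtain ⟨β, hβ, hd1⟩ := step_down hne hα
        have hgβ : distTo C (1 + β) = s + (m + 1) := ih (m+1) (by omega) (by omega) β hβ
        have hd1' : hammingDist (1 + α) (1 + β) = 1 := by rw [hd_compl_both]; exact hd1
        have hd1'' : hammingDist (1 + β) (1 + α) = 1 := by rw [hammingDist_comm]; exact hd1'
        have lip1 := distTo_lip hne (1 + α) (1 + β)
        have lip2 := distTo_lip hne (1 + β) (1 + α)
        rw [hd1'] at lip1
        rw [hd1''] at lip2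
        have hne1 : distTo C (1 + α) ≠ s + (m + 1) := by
          intro he
          have h3 := g_inj hcr hne (ν := α) (μ := β) (by rw [he, hgβ])
          rw [hα, hβ] at h3
          omega
        have hne2' : distTo C (1 + α) ≠ s + m := by
          obtain ⟨γ, hγ⟩ := levels_nonempty hne (show m ≤ ρ by omega)
          have hgγ : distTo C (1 + γ) = s + m := ih m (by omega) (by omega) γ hγ
          intro he
          have h3 := g_inj hcr hne (ν := α) (μ := γ) (by rw [he, hgγ])
          rw [hα, hγ] at h3
          omega
        omega
  -- contradiction at level ρ - s + 1
  have histar : ρ - s + 1 ≤ ρ := by omega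
  obtain ⟨α, hα⟩ := levels_nonempty hne histar
  obtain ⟨β, hβ, hd1⟩ := step_down hne hα
  have hgβ : distTo C (1 + β) = ρ := by
    have := Q (ρ - s) (le_refl _) β hβ
    rw [this]; omega
  have hd1' : hammingDist (1 + β) (1 + α) = 1 := by
    rw [hammingDist_comm, hd_compl_both]; exact hd1
  have lip2 := distTo_lip hne (1 + β) (1 + α)
  rw [hd1'] at lip2
  have hcrle : distTo C (1 + α) ≤ ρ := distTo_le_cr hne (1 + α)
  have hne1 : distTo C (1 + α) ≠ ρ := by
    intro he
    have h3 := g_inj hcr hne (ν := α) (μ := β) (by rw [he, hgβ])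
    rw [hα, hβ] at h3
    omega
  have hne2' : distTo C (1 + α) ≠ ρ - 1 := by
    obtain ⟨γ, hγ⟩ := levels_nonempty hne (show ρ - s - 1 ≤ ρ by omega)
    have hgγ : distTo C (1 + γ) = ρ - 1 := by
      have := Q (ρ - s - 1) (by omega) γ hγ
      rw [this]; omega
    intro he
    have h3 := g_inj hcr hne (ν := α) (μ := γ) (by rw [he, hgγ])
    rw [hα, hγ] at h3
    omega
  omega

lemma g_formula (hcr : CompletelyRegular C) (h0 : (0 : V n) ∈ C) (h1 : (1 : V n) ∉ C) :
    ∀ i ≤ coveringRadius C, ∀ α : V n, distTo C α = i →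
      distTo C (1 + α) = coveringRadius C - i := by
  have hne : C.Nonempty := ⟨0, h0⟩
  have hsρ := s_eq_cr hcr h0 h1
  set ρ := coveringRadius C with hρ
  intro i
  induction i using Nat.strong_induction_on with
  | _ i ih =>
    intro hiρ α hα
    match i, hiρ, hα, ih with
    | 0, hiρ, hα, ih =>
      rw [A1 hcr h0 ((distTo_eq_zero_iff hne).mp hα), hsρ]
      omega
    | 1, hiρ, hα, ih =>
      obtain ⟨β, hβ, hd1⟩ := step_down hne hα
      have hgβ : distTo C (1 + β) = ρ := by
        rw [A1 hcr h0 ((distTo_eq_zero_iff hne).mp hβ), hsρ]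
      have hd1' : hammingDist (1 + β) (1 + α) = 1 := by
        rw [hammingDist_comm, hd_compl_both]; exact hd1
      have lip2 := distTo_lip hne (1 + β) (1 + α)
      rw [hd1'] at lip2
      have hcrle : distTo C (1 + α) ≤ ρ := distTo_le_cr hne (1 + α)
      have hne1 : distTo C (1 + α) ≠ ρ := by
        intro he
        have h3 := g_inj hcr hne (ν := α) (μ := β) (by rw [he, hgβ])
        rw [hα, hβ] at h3
        omega
      omega
    | (m+2), hiρ, hα, ih =>
      obtain ⟨β, hβ, hd1⟩ := step_down hne hα
      have hgβ : distTo C (1 + β) = ρ - (m + 1) := ih (m+1) (by omega) (by omega) β hβ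
      have hd1' : hammingDist (1 + α) (1 + β) = 1 := by rw [hd_compl_both]; exact hd1
      have hd1'' : hammingDist (1 + β) (1 + α) = 1 := by rw [hammingDist_comm]; exact hd1'
      have lip1 := distTo_lip hne (1 + α) (1 + β)
      have lip2 := distTo_lip hne (1 + β) (1 + α)
      rw [hd1'] at lip1
      rw [hd1''] at lip2
      have hne1 : distTo C (1 + α) ≠ ρ - (m + 1) := by
        intro he
        have h3 := g_inj hcr hne (ν := α) (μ := β) (by rw [he, hgβ])
        rw [hα, hβ] at h3
        omega
      have hne2' : distTo C (1 + α) ≠ ρ - m := by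
        obtain ⟨γ, hγ⟩ := levels_nonempty hne (show m ≤ ρ by omega)
        have hgγ : distTo C (1 + γ) = ρ - m := ih m (by omega) (by omega) γ hγ
        intro he
        have h3 := g_inj hcr hne (ν := α) (μ := γ) (by rw [he, hgγ])
        rw [hα, hγ] at h3
        omega
      omega

end PartA

section PartB

variable {n : ℕ} {C : Set (V n)}

lemma zmod2_add_one_ne : ∀ a : ZMod 2, a + 1 ≠ a := by decide

lemma zmod2_eq_add_one : ∀ a b : ZMod 2, a ≠ b → b + 1 = a := by decide

lemma card_sphere (c : V n) (j : ℕ) (hj : j ≤ n) :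
    (Finset.univ.filter fun ν : V n => hammingDist ν c = j).card = n.choose j := by
  classical
  have h := Finset.card_powersetCard j (Finset.univ : Finset (Fin n))
  simp only [Finset.card_univ, Fintype.card_fin] at h
  rw [← h]
  apply Finset.card_bij' (i := fun ν _ => (Finset.univ.filter fun k => ν k ≠ c k))
    (j := fun A _ => fun k => if k ∈ A then c k + 1 else c k)
  · intro ν hν
    simp only [Finset.mem_filter, Finset.mem_univ, true_and] at hν
    rw [Finset.mem_powersetCard]
    exact ⟨Finset.subset_univ _, hν⟩
  · intro A hA
    rw [Finset.mem_powersetCard] at hA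
    simp only [Finset.mem_filter, Finset.mem_univ, true_and]
    have hset : (Finset.univ.filter fun k => (if k ∈ A then c k + 1 else c k) ≠ c k) = A := by
      ext k
      by_cases hk : k ∈ A
      · simp [hk, zmod2_add_one_ne (c k)]
      · simp [hk]
    show (Finset.univ.filter fun k => (if k ∈ A then c k + 1 else c k) ≠ c k).card = j
    rw [hset, hA.2]
  · intro ν hν
    funext k
    simp only [Finset.mem_filter, Finset.mem_univ, true_and]
    by_cases hk : ν k ≠ c k
    · rw [if_pos hk]
      exact zmod2_eq_add_one _ _ hk
    · rw [if_neg hk]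
      push_neg at hk
      exact hk.symm
  · intro A hA
    ext k
    by_cases hk : k ∈ A
    · simp [hk, zmod2_add_one_ne (c k)]
    · simp [hk]

lemma sphere_level (hne : C.Nonempty) {δ : ℕ}
    (hΔ : ∀ a ∈ C, ∀ b ∈ C, a ≠ b → δ ≤ hammingDist a b)
    {c ν : V n} {u : ℕ} (hc : c ∈ C) (hd : hammingDist ν c = u) (h2u : 2 * u ≤ δ) :
    distTo C ν = u := by
  refine le_antisymm (hd ▸ distTo_le hc ν) ?_
  refine le_csInf (hne.image _) ?_
  rintro b ⟨c', hc', rfl⟩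
  by_cases hcc : c' = c
  · subst hcc; omega
  · have h1 := hΔ c hc c' hc' (fun e => hcc e.symm)
    have h2 := hammingDist_triangle c ν c'
    have h3 : hammingDist c ν = u := by rwa [hammingDist_comm]
    omega

lemma choose_lt_succ {n k : ℕ} (h : 2 * k + 1 < n) : n.choose k < n.choose (k + 1) := by
  have hkn : k ≤ n := by omega
  have hpos := Nat.choose_pos hkn
  have heq := Nat.choose_succ_right_eq n k
  by_contra hle
  push_neg at hle
  have h2 : n.choose (k+1) * (k+1) ≤ n.choose k * (k+1) := Nat.mul_le_mul_right _ hle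
  rw [heq] at h2
  have h3 : n - k ≤ k + 1 := Nat.le_of_mul_le_mul_left (by linarith [Nat.mul_comm (n.choose k) (n-k), Nat.mul_comm (n.choose k) (k+1)] ) hpos
  omega

lemma choose_lt_of_lt {n a b : ℕ} (hab : a < b) (hb : 2 * b ≤ n) :
    n.choose a < n.choose b := by
  induction b with
  | zero => omega
  | succ b ih =>
    rcases Nat.lt_succ_iff_lt_or_eq.mp hab with h | h
    · exact lt_trans (ih h (by omega)) (choose_lt_succ (by omega))
    · subst h; exact choose_lt_succ (by omega)

end PartB

set_option maxHeartbeats 2000000 in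
lemma cr_ge {n δ : ℕ} {C : Set (V n)} (hcr : CompletelyRegular C) (hmin : IsMinDist C δ)
    (h0 : (0 : V n) ∈ C) (h1 : (1 : V n) ∉ C) : δ - 1 ≤ coveringRadius C := by
  classical
  have hne : C.Nonempty := ⟨0, h0⟩
  set ρ := coveringRadius C with hρdef
  by_contra hcon
  push_neg at hcon
  have hs := s_eq_cr hcr h0 h1
  have hρ1 : 1 ≤ ρ := by
    have hz : distTo C 1 ≠ 0 := fun h => h1 ((distTo_eq_zero_iff hne).mp h)
    omega
  have hρδ : ρ + 2 ≤ δ := by omega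
  obtain ⟨a, ha, b, hb, hab, hdab⟩ := hmin.2
  obtain ⟨c0, hc0, hc0ne⟩ : ∃ c ∈ C, c ≠ 0 := by
    by_cases h : a = 0
    · exact ⟨b, hb, by subst h; exact fun e => hab e.symm⟩
    · exact ⟨a, ha, h⟩
  have hwt : δ ≤ hammingDist (0 : V n) c0 := hmin.1 0 h0 c0 hc0 (fun e => hc0ne e.symm)
  have hwtn := hd_le_n (0 : V n) c0
  have hnρδ : ρ + δ ≤ n := by
    have h2 : distTo C 1 ≤ hammingDist 1 c0 := distTo_le hc0 1
    have h3 : hammingDist ((1 : V n) + 0) c0 = n - hammingDist 0 c0 := hd_compl_left 0 c0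
    rw [add_zero] at h3
    omega
  set t := ρ / 2 with ht
  set u := t + 1 with hu
  have hu_ρ : u ≤ ρ := by omega
  set CF := (Set.toFinite C).toFinset with hCFdef
  have memCF : ∀ x : V n, x ∈ CF ↔ x ∈ C := fun x => Set.Finite.mem_toFinset _
  have hCFpos : 0 < CF.card := Finset.card_pos.mpr ⟨0, (memCF 0).mpr h0⟩
  have hΔ := hmin.1
  have cardLev : ∀ j, 2*j+1 ≤ δ →
      (Finset.univ.filter fun ν : V n => distTo C ν = j).card = CF.card * n.choose j := by
    intro j h2j
    have hjn : j ≤ n := by omega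
    have hset : (Finset.univ.filter fun ν : V n => distTo C ν = j)
        = CF.biUnion (fun c => Finset.univ.filter fun ν : V n => hammingDist ν c = j) := by
      ext ν
      simp only [Finset.mem_filter, Finset.mem_univ, true_and, Finset.mem_biUnion]
      constructor
      · intro hν
        obtain ⟨c, hc, hd⟩ := exists_closest hne ν
        exact ⟨c, (memCF c).mpr hc, by rw [hd, hν]⟩
      · rintro ⟨c, hc, hd⟩
        exact sphere_level hne hΔ ((memCF c).mp hc) hd (by omega)
    rw [hset, Finset.card_biUnion]
    · rw [Finset.sum_congr rfl (fun c _ => card_sphere c j hjn), Finset.sum_const, smul_eq_mul]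
    · intro c hc c' hc' hcc
      rw [Function.onFun, Finset.disjoint_left]
      intro ν hν hν'
      simp only [Finset.mem_filter, Finset.mem_univ, true_and] at hν hν'
      have h1' := hΔ c ((memCF c).mp hc) c' ((memCF c').mp hc') hcc
      have h2' := hammingDist_triangle c ν c'
      have h3' : hammingDist c ν = j := by rwa [hammingDist_comm]
      omega
  have cardCompl : ∀ i, i ≤ ρ → (Finset.univ.filter fun ν : V n => distTo C ν = i).card
      = (Finset.univ.filter fun ν : V n => distTo C ν = ρ - i).card := by
    intro i hi
    refine Finset.card_bij' (fun ν _ => 1 + ν) (fun ν _ => 1 + ν) ?_ ?_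
      (fun ν _ => one_add_one_add ν) (fun ν _ => one_add_one_add ν)
    · intro ν hν
      simp only [Finset.mem_filter, Finset.mem_univ, true_and] at hν ⊢
      exact g_formula hcr h0 h1 i hi ν hν
    · intro ν hν
      simp only [Finset.mem_filter, Finset.mem_univ, true_and] at hν ⊢
      have hg := g_formula hcr h0 h1 (ρ - i) (by omega) ν hν
      rw [hg]; omega
  by_cases hcase : 2*u+1 ≤ δ
  · have e1 := cardLev u hcase
    have e2 := cardLev (ρ - u) (by omega)
    have e3 := cardCompl u hu_ρ
    rw [e3, e2] at e1
    have hlt : n.choose (ρ - u) < n.choose u := choose_lt_of_lt (by omega) (by omega)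
    have heq := Nat.eq_of_mul_eq_mul_left hCFpos e1
    omega
  · have hρ2t : ρ = 2*t := by omega
    have hδ2t : δ = 2*t+2 := by omega
    have ht1 : 1 ≤ t := by omega
    have h2uδ : 2*u ≤ δ := by omega
    have dbl : ∑ c ∈ CF, (Finset.univ.filter fun ν : V n => hammingDist ν c = u).card
        = ∑ ν : V n, (CF.filter fun c => hammingDist ν c = u).card := by
      simp_rw [Finset.card_filter]
      exact Finset.sum_comm
    have hLHS : ∑ c ∈ CF, (Finset.univ.filter fun ν : V n => hammingDist ν c = u).card
        = CF.card * n.choose u := by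
      rw [Finset.sum_congr rfl (fun c _ => card_sphere c u (by omega)), Finset.sum_const,
        smul_eq_mul]
    set L := Finset.univ.filter fun ν : V n => distTo C ν = u with hL
    have hRHS1 : ∑ ν : V n, (CF.filter fun c => hammingDist ν c = u).card
        = ∑ ν ∈ L, (CF.filter fun c => hammingDist ν c = u).card := by
      symm
      apply Finset.sum_subset (Finset.subset_univ _)
      intro ν _ hν
      rw [Finset.card_eq_zero, Finset.filter_eq_empty_iff]
      intro c hc hd
      exact hν (Finset.mem_filter.mpr
        ⟨Finset.mem_univ ν, sphere_level hne hΔ ((memCF c).mp hc) hd h2uδ⟩)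
    obtain ⟨ν₀, hν₀⟩ := levels_nonempty hne hu_ρ
    set D := CF.filter fun c => hammingDist ν₀ c = u with hD
    set lam := D.card with hlamdef
    have ncard_conv : ∀ ν : V n, {β ∈ C | hammingDist ν β = u}.ncard
        = (CF.filter fun c => hammingDist ν c = u).card := by
      intro ν
      have hseteq : {β ∈ C | hammingDist ν β = u}
          = ↑(CF.filter fun c => hammingDist ν c = u) := by
        ext x
        simp only [Set.mem_setOf_eq, Finset.coe_filter, memCF]
      rw [hseteq, Set.ncard_coe_finset]
    have hlam : ∀ ν ∈ L, (CF.filter fun c => hammingDist ν c = u).card = lam := by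
      intro ν hν
      have hν' := (Finset.mem_filter.mp hν).2
      have hcc := hcr u u ν ν₀ hν' hν₀
      rw [ncard_conv ν, ncard_conv ν₀] at hcc
      exact hcc
    have hRHS2 : ∑ ν ∈ L, (CF.filter fun c => hammingDist ν c = u).card = L.card * lam := by
      rw [Finset.sum_congr rfl hlam, Finset.sum_const, smul_eq_mul]
    have hLcard : L.card = CF.card * n.choose (t-1) := by
      have hcc := cardCompl u hu_ρ
      have h2 : ρ - u = t - 1 := by omega
      rw [hL, hcc, h2, cardLev (t-1) (by omega)]
    have hlamu : lam * u ≤ n := by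
      set A : V n → Finset (Fin n) := fun c => Finset.univ.filter fun k => ν₀ k ≠ c k with hA
      have hAcard : ∀ c ∈ D, (A c).card = u := by
        intro c hc
        have hc1 := Finset.mem_filter.mp hc
        exact hc1.2
      have hpair : ∀ c ∈ D, ∀ c' ∈ D, c ≠ c' → Disjoint (A c) (A c') := by
        intro c hc c' hc' hcc
        have hc1 := Finset.mem_filter.mp hc
        have hc1' := Finset.mem_filter.mp hc'
        have hdcc : δ ≤ hammingDist c c' :=
          hΔ c ((memCF c).mp hc1.1) c' ((memCF c').mp hc1'.1) hcc
        have hsub : (Finset.univ.filter fun k => c k ≠ c' k) ⊆ A c ∪ A c' := by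
          intro k hk
          simp only [Finset.mem_filter, Finset.mem_univ, true_and] at hk
          simp only [hA, Finset.mem_union, Finset.mem_filter, Finset.mem_univ, true_and]
          by_contra hno
          push_neg at hno
          apply hk
          rw [← hno.1, ← hno.2]
        have h4 : hammingDist c c' ≤ (A c ∪ A c').card := Finset.card_le_card hsub
        have h5 := Finset.card_union_le (A c) (A c')
        have h6 := Finset.card_union_add_card_inter (A c) (A c')
        have hu1 : (A c).card = u := hAcard c hc
        have hu2 : (A c').card = u := hAcard c' hc'
        have h7 : ((A c) ∩ (A c')).card = 0 := by omega
        rw [Finset.card_eq_zero] at h7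
        exact Finset.disjoint_iff_inter_eq_empty.mpr h7
      have hbi := Finset.card_biUnion hpair
      have hsum : ∑ c ∈ D, (A c).card = D.card * u := by
        rw [Finset.sum_congr rfl hAcard, Finset.sum_const, smul_eq_mul]
      have hle := Finset.card_le_univ (D.biUnion A)
      simp only [Finset.card_univ, Fintype.card_fin] at hle
      have hDu : D.card * u ≤ n := by omega
      rw [hlamdef]
      exact hDu
    have main : CF.card * n.choose u = (CF.card * n.choose (t-1)) * lam := by
      rw [← hLHS, dbl, hRHS1, hRHS2, hLcard]
    have hkey : n.choose u = n.choose (t-1) * lam := by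
      have hmm : CF.card * n.choose u = CF.card * (n.choose (t-1) * lam) := by
        rw [main]; ring
      exact Nat.eq_of_mul_eq_mul_left hCFpos hmm
    have id1 : n.choose (t+1) * (t+1) = n.choose t * (n - t) := Nat.choose_succ_right_eq n t
    have id2 : n.choose t * t = n.choose (t-1) * (n - (t-1)) := by
      have hcs := Nat.choose_succ_right_eq n (t-1)
      have h2 : t - 1 + 1 = t := by omega
      rw [h2] at hcs
      exact hcs
    have hKm : 0 < n.choose (t-1) := Nat.choose_pos (by omega)
    have hineq : n.choose t * (n - t) ≤ n.choose (t-1) * n := by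
      calc n.choose t * (n-t) = n.choose (t+1) * (t+1) := id1.symm
        _ = n.choose (t-1) * lam * (t+1) := by rw [← hu, hkey]
        _ = n.choose (t-1) * (lam * (t+1)) := by ring
        _ ≤ n.choose (t-1) * n := Nat.mul_le_mul (le_refl _) (by rw [← hu]; exact hlamu)
    have h8 : n.choose (t-1) * ((n-(t-1)) * (n-t)) ≤ n.choose (t-1) * (n * t) := by
      calc n.choose (t-1) * ((n-(t-1)) * (n-t)) = (n.choose t * t) * (n-t) := by rw [id2]; ring
        _ = (n.choose t * (n-t)) * t := by ring
        _ ≤ (n.choose (t-1) * n) * t := Nat.mul_le_mul hineq (le_refl _)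
        _ = n.choose (t-1) * (n * t) := by ring
    have h9 : (n-(t-1)) * (n-t) ≤ n * t := Nat.le_of_mul_le_mul_left h8 hKm
    have hn4t : 4*t + 2 ≤ n := by omega
    have hm1 : n - (t-1) = n - t + 1 := by omega
    rw [hm1] at h9
    have htn : t ≤ n := by omega
    zify [htn] at h9
    have hmz : (3:ℤ)*t + 2 ≤ (n:ℤ) - t := by
      have h4c : (4:ℤ)*t + 2 ≤ (n:ℤ) := by exact_mod_cast hn4t
      linarith
    have htz : (1:ℤ) ≤ (t:ℤ) := by exact_mod_cast ht1
    have hM0 : (0:ℤ) ≤ (n:ℤ) - t := by linarith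
    have a1 : (n:ℤ) * t = (t:ℤ) * ((n:ℤ) - t) + (t:ℤ) * t := by ring
    have a2 : (t:ℤ) * t ≤ (t:ℤ) * ((n:ℤ) - t) :=
      mul_le_mul_of_nonneg_left (by linarith) (by linarith)
    have a3 : ((3:ℤ)*t+3) * ((n:ℤ) - t) ≤ ((n:ℤ) - t + 1) * ((n:ℤ) - t) :=
      mul_le_mul_of_nonneg_right (by linarith) hM0
    have a4 : ((3:ℤ)*t+3) * ((n:ℤ) - t) = 3 * ((t:ℤ) * ((n:ℤ) - t)) + 3 * ((n:ℤ) - t) := by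
      ring
    rw [a4] at a3
    have a6 : ((n:ℤ) - t) ≤ (t:ℤ) * ((n:ℤ) - t) := by
      have := mul_le_mul_of_nonneg_right htz hM0
      linarith
    linarith [h9, a1, a2, a3, a6, hmz]


/-- Lemma: a completely regular code with `δ ≥ 3`, `0 ∈ C`, `1 ∉ C` has covering radius
`ρ ≥ δ - 1` and `C_ρ = 1 + C`. -/
theorem stmt_1 {n δ : ℕ} (C : Set (V n)) (hcr : CompletelyRegular C)
    (hmin : IsMinDist C δ) (hδ : 3 ≤ δ) (h0 : (0 : V n) ∈ C) (h1 : (1 : V n) ∉ C) :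
    δ - 1 ≤ coveringRadius C ∧
    {α : V n | distTo C α = coveringRadius C} = (fun c : V n => 1 + c) '' C := by
  have hne : C.Nonempty := ⟨0, h0⟩
  constructor
  · exact cr_ge hcr hmin h0 h1
  · ext α
    simp only [Set.mem_setOf_eq, Set.mem_image]
    constructor
    · intro hα
      refine ⟨1 + α, ?_, one_add_one_add α⟩
      have hg := g_formula hcr h0 h1 (coveringRadius C) (le_refl _) α hα
      rw [Nat.sub_self] at hg
      exact (distTo_eq_zero_iff hne).mp hg
    · rintro ⟨c, hc, rfl⟩
      rw [A1 hcr h0 hc, s_eq_cr hcr h0 h1]
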